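/- Under Assumptions 1–3, the iterates of SOGD with parameters δ > 0 and α = D/√2 satisfy, for every w ∈ W and every T ≥ 1: Σ_{t=1}^T f_t(w_t) − Σ_{t=1}^T f_t(w) ≤ 8 H D² + D √(2δ + 8H Σ_{t=1}^T f_t(w)). -/

import Mathlib

open InnerProductSpace

lemma grad_convex_ineq {E : Type*} [NormedAddCommGroup E] [InnerProductSpace ℝ E]
    [CompleteSpace E]
    {f : E → ℝ} (hconv : ConvexOn ℝ Set.univ f) (hdiff : Differentiable ℝ f) (x y : E) :
    f x + inner ℝ (gradient f x) (y - x) ≤ f y := by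
  set φ : ℝ → E := fun t : ℝ => t • (y - x) + x with hφ
  have hline : ⇑(AffineMap.lineMap x y : ℝ →ᵃ[ℝ] E) = φ := by
    funext t
    simp [hφ, AffineMap.lineMap_apply_module, sub_smul, smul_sub]
    abel
  have hφconv : ConvexOn ℝ Set.univ (f ∘ φ) := by
    have := hconv.comp_affineMap (AffineMap.lineMap x y : ℝ →ᵃ[ℝ] E)
    rw [hline] at this
    simpa using this
  have hc : HasDerivAt φ (y - x) 0 := by
    have := ((hasDerivAt_id (0:ℝ)).smul_const (y - x)).add_const x
    simp only [one_smul] at this; exact this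
  have hφ0 : φ 0 = x := by simp [hφ]
  have hφ1 : φ 1 = y := by simp [hφ]
  have hfd : HasFDerivAt f (toDual ℝ E (gradient f x)) (φ 0) := by
    rw [hφ0]; exact (hdiff x).hasGradientAt.hasFDerivAt
  have hcomp : HasDerivAt (f ∘ φ) (inner ℝ (gradient f x) (y - x)) 0 := by
    have := hfd.comp_hasDerivAt 0 hc
    simpa [toDual_apply_apply] using this
  have h := hφconv.le_slope_of_hasDerivAt (Set.mem_univ (0:ℝ)) (Set.mem_univ (1:ℝ))
    one_pos hcomp
  rw [slope_def_field] at h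
  simp only [Function.comp_apply, hφ0, hφ1] at h
  simp only [sub_zero, div_one] at h
  linarith

lemma descent_lemma {E : Type*} [NormedAddCommGroup E] [InnerProductSpace ℝ E]
    [CompleteSpace E]
    {f : E → ℝ} (hdiff : Differentiable ℝ f) {H : ℝ} (hH : 0 ≤ H)
    (hsm : ∀ a b : E, ‖gradient f a - gradient f b‖ ≤ H * ‖a - b‖) (x y : E) :
    f y ≤ f x + inner ℝ (gradient f x) (y - x) + H * ‖y - x‖ ^ 2 := by
  set g : E → ℝ := fun z => f z - inner ℝ (gradient f x) z with hg
  set F' : E → (E →L[ℝ] ℝ) := fun z =>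
    ((toDual ℝ E (gradient f z) : E →L[ℝ] ℝ) - (toDual ℝ E (gradient f x) : E →L[ℝ] ℝ))
  have hgd : ∀ z ∈ segment ℝ x y, HasFDerivWithinAt g (F' z) (segment ℝ x y) z := by
    intro z _
    exact (((hdiff z).hasGradientAt.hasFDerivAt).sub
      ((toDual ℝ E (gradient f x) : E →L[ℝ] ℝ).hasFDerivAt)).hasFDerivWithinAt
  have hseg : Convex ℝ (segment ℝ x y) := convex_segment x y
  have hbound : ∀ z ∈ segment ℝ x y, ‖F' z‖ ≤ H * ‖y - x‖ := by
    intro z hz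
    have h1 : ‖F' z‖ = ‖gradient f z - gradient f x‖ := by
      rw [show F' z = _ - _ from rfl, ← map_sub]
      exact (toDual ℝ E).norm_map _
    rw [h1]
    refine le_trans (hsm z x) ?_
    obtain ⟨a, b, ha, hb, hab, rfl⟩ := hz
    have hzx : a • x + b • y - x = b • (y - x) := by
      have : a = 1 - b := by linarith
      rw [this]; module
    rw [hzx, norm_smul]
    have hn : (0:ℝ) ≤ ‖y - x‖ := norm_nonneg _
    have hb1 : b ≤ 1 := by linarith
    simp only [Real.norm_eq_abs, abs_of_nonneg hb]
    nlinarith [mul_nonneg hH hn]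
  have key := hseg.norm_image_sub_le_of_norm_hasFDerivWithin_le hgd hbound
    (left_mem_segment ℝ x y) (right_mem_segment ℝ x y)
  have hgyx : g y - g x = f y - f x - inner ℝ (gradient f x) (y - x) := by
    simp only [hg]
    rw [inner_sub_right]
    ring
  rw [Real.norm_eq_abs] at key
  have := abs_le.mp key
  have hsq : ‖y - x‖ * ‖y - x‖ = ‖y - x‖ ^ 2 := by ring
  nlinarith [this.2]

lemma self_bound {E : Type*} [NormedAddCommGroup E] [InnerProductSpace ℝ E]
    [CompleteSpace E]
    {f : E → ℝ} (hdiff : Differentiable ℝ f) (hnn : ∀ z : E, 0 ≤ f z)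
    {H : ℝ} (hH : 0 ≤ H)
    (hsm : ∀ a b : E, ‖gradient f a - gradient f b‖ ≤ H * ‖a - b‖) (x : E) :
    ‖gradient f x‖ ^ 2 ≤ 4 * H * f x := by
  set g := gradient f x with hgdef
  have key : ∀ t : ℝ, 0 ≤ t → 0 ≤ f x - t * ‖g‖ ^ 2 + H * t ^ 2 * ‖g‖ ^ 2 := by
    intro t ht
    have hd := descent_lemma hdiff hH hsm x (x - t • g)
    have h1 : (x - t • g) - x = -(t • g) := by abel
    rw [h1] at hd
    have h2 : (inner ℝ g (-(t • g)) : ℝ) = -(t * ‖g‖ ^ 2) := by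
      rw [inner_neg_right, real_inner_smul_right, real_inner_self_eq_norm_sq]
    have h3 : ‖-(t • g)‖ ^ 2 = t ^ 2 * ‖g‖ ^ 2 := by
      rw [norm_neg, norm_smul, Real.norm_eq_abs, mul_pow, sq_abs]
    rw [h2, h3] at hd
    have := hnn (x - t • g)
    nlinarith
  rcases eq_or_lt_of_le hH with hH0 | hHpos
  · -- H = 0
    by_contra hcon
    push_neg at hcon
    rw [← hH0] at hcon
    simp only [mul_zero, zero_mul] at hcon
    have hgpos : 0 < ‖g‖ ^ 2 := by nlinarith [sq_nonneg ‖g‖]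
    have ht : (0:ℝ) ≤ (f x + 1) / ‖g‖ ^ 2 :=
      div_nonneg (by linarith [hnn x]) (le_of_lt hgpos)
    have hk := key _ ht
    rw [← hH0] at hk
    rw [div_mul_cancel₀ _ (ne_of_gt hgpos)] at hk
    nlinarith [hnn x]
  · have hk := key (1 / (2 * H)) (by positivity)
    have h4 : (0:ℝ) < 4 * H := by linarith
    have hk' : (1 / (2 * H)) * ‖g‖ ^ 2 ≤ f x + H * (1 / (2 * H)) ^ 2 * ‖g‖ ^ 2 := by linarith
    have hmul := mul_le_mul_of_nonneg_left hk' (le_of_lt h4)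
    have e1 : 4 * H * ((1 / (2 * H)) * ‖g‖ ^ 2) = 2 * ‖g‖ ^ 2 := by
      field_simp
      ring
    have e2 : 4 * H * (f x + H * (1 / (2 * H)) ^ 2 * ‖g‖ ^ 2) = 4 * H * f x + ‖g‖ ^ 2 := by
      field_simp
      ring
    rw [e1, e2] at hmul
    linarith

lemma proj_nonexp {E : Type*} [NormedAddCommGroup E] [InnerProductSpace ℝ E]
    {W : Set E} (hW : Convex ℝ W) {proj : E → E}
    (hproj : ∀ z : E, proj z ∈ W ∧ ∀ y ∈ W, ‖z - proj z‖ ≤ ‖z - y‖)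
    (z : E) {x : E} (hx : x ∈ W) : ‖proj z - x‖ ≤ ‖z - x‖ := by
  set p := proj z with hp
  have hpW : p ∈ W := (hproj z).1
  have hinf : ‖z - p‖ = ⨅ w : W, ‖z - w‖ := by
    apply le_antisymm
    · haveI : Nonempty W := ⟨⟨p, hpW⟩⟩
      exact le_ciInf fun w => (hproj z).2 w w.2
    · haveI : Nonempty W := ⟨⟨p, hpW⟩⟩
      exact ciInf_le ⟨0, fun r ⟨w, hw⟩ => hw ▸ norm_nonneg _⟩ (⟨p, hpW⟩ : W)
  have hvar := (norm_eq_iInf_iff_real_inner_le_zero hW hpW).mp hinf x hx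
  have hexp : ‖z - x‖ ^ 2 = ‖z - p‖ ^ 2 - 2 * inner ℝ (z - p) (x - p) + ‖x - p‖ ^ 2 := by
    have h1 : z - x = (z - p) - (x - p) := by abel
    rw [h1, @norm_sub_sq_real]
  have h2 : ‖p - x‖ = ‖x - p‖ := norm_sub_rev _ _
  rw [h2]
  by_contra hcon
  push_neg at hcon
  nlinarith [norm_nonneg (z - x), norm_nonneg (x - p), norm_nonneg (z - p), sq_nonneg ‖z - p‖]

lemma sum_div_sqrt_le (δ : ℝ) (hδ : 0 < δ) (a : ℕ → ℝ) (ha : ∀ i, 0 ≤ a i) (T : ℕ) :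
    ∑ t ∈ Finset.Icc 1 T, a t / Real.sqrt (δ + ∑ i ∈ Finset.Icc 1 t, a i)
      ≤ 2 * Real.sqrt (δ + ∑ i ∈ Finset.Icc 1 T, a i) - 2 * Real.sqrt δ := by
  induction T with
  | zero => simp
  | succ n ih =>
    rw [Finset.sum_Icc_succ_top (by omega : 1 ≤ n + 1)]
    have hSn : 0 < δ + ∑ i ∈ Finset.Icc 1 n, a i := by
      have : 0 ≤ ∑ i ∈ Finset.Icc 1 n, a i := Finset.sum_nonneg fun i _ => ha i
      linarith
    have hSn1 : δ + ∑ i ∈ Finset.Icc 1 (n+1), a i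
        = (δ + ∑ i ∈ Finset.Icc 1 n, a i) + a (n+1) := by
      rw [Finset.sum_Icc_succ_top (by omega : 1 ≤ n + 1)]; ring
    set s := δ + ∑ i ∈ Finset.Icc 1 n, a i with hs
    set c := a (n+1) with hc
    have hkey : c / Real.sqrt (s + c) ≤ 2 * Real.sqrt (s + c) - 2 * Real.sqrt s := by
      set u := Real.sqrt (s + c) with hu
      set v := Real.sqrt s with hv
      have hcnn : 0 ≤ c := ha (n+1)
      have hu2 : u ^ 2 = s + c := Real.sq_sqrt (by linarith)
      have hv2 : v ^ 2 = s := Real.sq_sqrt (by linarith)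
      have hupos : 0 < u := Real.sqrt_pos.mpr (by linarith)
      have hvpos : 0 < v := Real.sqrt_pos.mpr (by rw [hs]; exact hSn)
      rw [div_le_iff₀ hupos]
      nlinarith [sq_nonneg (u - v)]
    rw [hSn1]
    linarith [hkey]

lemma one_step {E : Type*} [NormedAddCommGroup E] [InnerProductSpace ℝ E]
    (x p q g : E) (η : ℝ)
    (h : ‖q - x‖ ≤ ‖(p - η • g) - x‖) :
    2 * η * inner ℝ g (p - x) ≤ ‖p - x‖ ^ 2 - ‖q - x‖ ^ 2 + η ^ 2 * ‖g‖ ^ 2 := by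
  have hexp : ‖(p - η • g) - x‖ ^ 2
      = ‖p - x‖ ^ 2 - 2 * inner ℝ (p - x) (η • g) + ‖η • g‖ ^ 2 := by
    have h1 : (p - η • g) - x = (p - x) - η • g := by abel
    rw [h1, @norm_sub_sq_real]
  have h2 : (inner ℝ (p - x) (η • g) : ℝ) = η * inner ℝ g (p - x) := by
    rw [real_inner_smul_right, real_inner_comm]
  have h3 : ‖η • g‖ ^ 2 = η ^ 2 * ‖g‖ ^ 2 := by
    rw [norm_smul, mul_pow, Real.norm_eq_abs, sq_abs]
  have h4 : ‖q - x‖ ^ 2 ≤ ‖(p - η • g) - x‖ ^ 2 := by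
    have := norm_nonneg (q - x)
    nlinarith
  nlinarith [hexp, h2, h3]


set_option maxHeartbeats 1000000 in
/-- Theorem 2: scale-free online gradient descent (SOGD) with parameters `δ > 0` and
`α = D/√2`, i.e. `w (t+1) = Π_W [w t − η t • ∇ f t (w t)]` with
`η t = α / √(δ + Σ_{i=1}^t ‖∇ f i (w i)‖²)`, on convex, differentiable, nonnegative,
`H`-smooth losses over a nonempty closed convex domain `W` of diameter at most `D`,
satisfies, for every `x ∈ W` and every `T ≥ 1`,
`Σ_{t=1}^T f t (w t) − Σ_{t=1}^T f t x ≤ 8 H D² + D √(2δ + 8H Σ_{t=1}^T f t x)`. -/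
theorem stmt_1
    {E : Type*} [NormedAddCommGroup E] [InnerProductSpace ℝ E] [FiniteDimensional ℝ E]
    (W : Set E) (hWne : W.Nonempty) (hWclosed : IsClosed W) (hWconvex : Convex ℝ W)
    -- `proj` is the metric projection onto `W`
    (proj : E → E)
    (hproj : ∀ x : E, proj x ∈ W ∧ ∀ y ∈ W, ‖x - proj x‖ ≤ ‖x - y‖)
    -- Assumption 1: the diameter of `W` is bounded by `D`
    (D : ℝ) (hdiam : ∀ x ∈ W, ∀ y ∈ W, ‖x - y‖ ≤ D)
    -- Assumption 2: the online functions are convex, differentiable and nonnegative on `E`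
    (f : ℕ → E → ℝ)
    (hconv : ∀ t, ConvexOn ℝ Set.univ (f t))
    (hdiff : ∀ t, Differentiable ℝ (f t))
    (hnonneg : ∀ t, ∀ x : E, 0 ≤ f t x)
    -- Assumption 3: the online functions are `H`-smooth
    (H : ℝ) (hH : 0 ≤ H)
    (hsmooth : ∀ t, ∀ x y : E,
      ‖gradient (f t) x - gradient (f t) y‖ ≤ H * ‖x - y‖)
    -- SOGD with parameters `δ > 0` and `α = D/√2`
    (δ : ℝ) (hδ : 0 < δ)
    (w : ℕ → E) (hw1 : w 1 ∈ W)
    (hwrec : ∀ t ≥ 1, w (t + 1) =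
      proj (w t - ((D / Real.sqrt 2) /
        Real.sqrt (δ + ∑ i ∈ Finset.Icc 1 t, ‖gradient (f i) (w i)‖ ^ 2)) •
          gradient (f t) (w t)))
    (T : ℕ) (hT : 1 ≤ T) (x : E) (hx : x ∈ W) :
    ∑ t ∈ Finset.Icc 1 T, f t (w t) - ∑ t ∈ Finset.Icc 1 T, f t x
      ≤ 8 * H * D ^ 2
        + D * Real.sqrt (2 * δ + 8 * H * ∑ t ∈ Finset.Icc 1 T, f t x) := by
  have hD0 : 0 ≤ D := by simpa using hdiam x hx x hx
  have hwW : ∀ t : ℕ, 1 ≤ t → w t ∈ W := by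
    intro t
    induction t with
    | zero => intro h; exact absurd h (by norm_num)
    | succ n ih =>
      intro _
      rcases Nat.eq_zero_or_pos n with h0 | hpos
      · subst h0; exact hw1
      · rw [hwrec n hpos]; exact (hproj _).1
  set g : ℕ → E := fun t => gradient (f t) (w t) with hg
  set a : ℕ → ℝ := fun t => ‖g t‖ ^ 2 with ha
  set S : ℕ → ℝ := fun t => δ + ∑ i ∈ Finset.Icc 1 t, a i with hS
  have hanonneg : ∀ i, 0 ≤ a i := fun i => sq_nonneg _
  have hSpos : ∀ t, 0 < S t := by
    intro t
    have : 0 ≤ ∑ i ∈ Finset.Icc 1 t, a i := Finset.sum_nonneg fun i _ => hanonneg i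
    simp only [hS]
    linarith
  have hSx_nonneg : 0 ≤ ∑ t ∈ Finset.Icc 1 T, f t x :=
    Finset.sum_nonneg fun t _ => hnonneg t x
  rcases eq_or_lt_of_le hD0 with hDeq | hDpos
  · -- degenerate case D = 0
    have hwx : ∀ t ∈ Finset.Icc 1 T, f t (w t) = f t x := by
      intro t ht
      have h1 := hdiam (w t) (hwW t (Finset.mem_Icc.mp ht).1) x hx
      rw [← hDeq] at h1
      have h2 : w t - x = 0 := norm_le_zero_iff.mp h1
      have : w t = x := by
        have := sub_eq_zero.mp h2; exact this
      rw [this]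
    rw [Finset.sum_congr rfl hwx, ← hDeq]
    have : 0 ≤ Real.sqrt (2 * δ + 8 * H * ∑ t ∈ Finset.Icc 1 T, f t x) := Real.sqrt_nonneg _
    norm_num
  -- main case D > 0
  set α : ℝ := D / Real.sqrt 2 with hα
  set η : ℕ → ℝ := fun t => α / Real.sqrt (S t) with hη
  have hsqrt2 : (0:ℝ) < Real.sqrt 2 := Real.sqrt_pos.mpr (by norm_num)
  have hαpos : 0 < α := div_pos hDpos hsqrt2
  have hsqrtS : ∀ t, 0 < Real.sqrt (S t) := fun t => Real.sqrt_pos.mpr (hSpos t)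
  have hηpos : ∀ t, 0 < η t := fun t => div_pos hαpos (hsqrtS t)
  have hSmono : ∀ t, S t ≤ S (t + 1) := by
    intro t
    simp only [hS]
    rw [Finset.sum_Icc_succ_top (by omega : 1 ≤ t + 1)]
    have := hanonneg (t + 1)
    linarith
  have hηmono : ∀ t, η (t + 1) ≤ η t := by
    intro t
    simp only [hη]
    gcongr
    exact hSmono t
  set b : ℕ → ℝ := fun t => ‖w t - x‖ ^ 2 with hb
  have hbnn : ∀ t, 0 ≤ b t := fun t => sq_nonneg _
  have hbD : ∀ t, 1 ≤ t → b t ≤ D ^ 2 := by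
    intro t ht
    have := hdiam (w t) (hwW t ht) x hx
    simp only [hb]
    exact pow_le_pow_left₀ (norm_nonneg _) this 2
  have hwrec' : ∀ t, 1 ≤ t → w (t + 1) = proj (w t - η t • g t) := by
    intro t ht
    rw [hwrec t ht]
  have hstep : ∀ t, 1 ≤ t → 2 * η t * inner ℝ (g t) (w t - x)
      ≤ b t - b (t + 1) + (η t) ^ 2 * a t := by
    intro t ht
    have hle : ‖w (t + 1) - x‖ ≤ ‖(w t - η t • g t) - x‖ := by
      rw [hwrec' t ht]
      exact proj_nonexp hWconvex hproj _ hx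
    exact one_step x (w t) (w (t + 1)) (g t) (η t) hle
  have hstep' : ∀ t, 1 ≤ t → (inner ℝ (g t) (w t - x) : ℝ)
      ≤ (b t - b (t + 1)) / (2 * η t) + η t * a t / 2 := by
    intro t ht
    have h := hstep t ht
    have h2η : (0:ℝ) < 2 * η t := by linarith [hηpos t]
    rw [div_add_div _ _ (ne_of_gt h2η) (two_ne_zero), le_div_iff₀ (by positivity)]
    nlinarith [h, hηpos t]
  have hinv : ∀ n, 1 ≤ n → ∑ t ∈ Finset.Icc 1 n, (inner ℝ (g t) (w t - x) : ℝ)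
      ≤ (D ^ 2 - b (n + 1)) / (2 * η n) + ∑ t ∈ Finset.Icc 1 n, η t * a t / 2 := by
    intro n hn
    induction n, hn using Nat.le_induction with
    | base =>
      simp only [Finset.Icc_self, Finset.sum_singleton]
      have h := hstep' 1 le_rfl
      have hb1 := hbD 1 le_rfl
      have h2η : (0:ℝ) < 2 * η 1 := by linarith [hηpos 1]
      have : (b 1 - b 2) / (2 * η 1) ≤ (D ^ 2 - b 2) / (2 * η 1) :=
        (div_le_div_iff_of_pos_right h2η).mpr (by linarith)
      linarith
    | succ n hn ih =>
      rw [Finset.sum_Icc_succ_top (by omega : 1 ≤ n + 1),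
        Finset.sum_Icc_succ_top (by omega : 1 ≤ n + 1)]
      have h := hstep' (n + 1) (by omega)
      have h2η : (0:ℝ) < 2 * η (n + 1) := by linarith [hηpos (n + 1)]
      have h2η' : (0:ℝ) < 2 * η n := by linarith [hηpos n]
      have hbn := hbD (n + 1) (by omega)
      have hmono : (D ^ 2 - b (n + 1)) / (2 * η n)
          ≤ (D ^ 2 - b (n + 1)) / (2 * η (n + 1)) := by
        gcongr
        · linarith [hηmono n]
      have hcomb : (D ^ 2 - b (n + 1)) / (2 * η (n + 1))
          + (b (n + 1) - b (n + 2)) / (2 * η (n + 1))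
          = (D ^ 2 - b (n + 2)) / (2 * η (n + 1)) := by
        rw [← add_div]; ring_nf
      linarith
  -- final assembly
  have hbound1 : ∑ t ∈ Finset.Icc 1 T, (inner ℝ (g t) (w t - x) : ℝ)
      ≤ D ^ 2 * Real.sqrt (S T) / (2 * α) + α * Real.sqrt (S T) := by
    have h1 := hinv T hT
    have h2 : (D ^ 2 - b (T + 1)) / (2 * η T) ≤ D ^ 2 / (2 * η T) := by
      apply (div_le_div_iff_of_pos_right (by linarith [hηpos T])).mpr
      linarith [hbnn (T + 1)]
    have h3 : D ^ 2 / (2 * η T) = D ^ 2 * Real.sqrt (S T) / (2 * α) := by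
      simp only [hη]
      rw [eq_comm]
      field_simp
    have h4 : ∑ t ∈ Finset.Icc 1 T, η t * a t / 2 ≤ α * Real.sqrt (S T) := by
      have hsum := sum_div_sqrt_le δ hδ a hanonneg T
      have heq : ∀ t ∈ Finset.Icc 1 T, η t * a t / 2
          = (α / 2) * (a t / Real.sqrt (δ + ∑ i ∈ Finset.Icc 1 t, a i)) := by
        intro t _
        simp only [hη, hS]
        ring
      rw [Finset.sum_congr rfl heq, ← Finset.mul_sum]
      have hδs : 0 ≤ Real.sqrt δ := Real.sqrt_nonneg _
      have hST : Real.sqrt (δ + ∑ i ∈ Finset.Icc 1 T, a i) = Real.sqrt (S T) := by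
        simp only [hS]
      rw [hST] at hsum
      nlinarith [hsum, hαpos, Real.sqrt_nonneg (S T)]
    linarith [h1, h2, h4, h3.le, h3.ge]
  have hid : D ^ 2 * Real.sqrt (S T) / (2 * α) + α * Real.sqrt (S T)
      = D * Real.sqrt 2 * Real.sqrt (S T) := by
    simp only [hα]
    have h2 : Real.sqrt 2 * Real.sqrt 2 = 2 := Real.mul_self_sqrt (by norm_num)
    have hDne : D ≠ 0 := ne_of_gt hDpos
    have h2ne : Real.sqrt 2 ≠ 0 := ne_of_gt hsqrt2
    field_simp
    ring_nf
    rw [Real.sq_sqrt (by norm_num : (0:ℝ) ≤ 2)]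
    ring
  have hsqrt2S : Real.sqrt (2 * S T) = Real.sqrt 2 * Real.sqrt (S T) :=
    Real.sqrt_mul (by norm_num) _
  have hinner_sum : ∑ t ∈ Finset.Icc 1 T, (f t (w t) - f t x)
      ≤ ∑ t ∈ Finset.Icc 1 T, (inner ℝ (g t) (w t - x) : ℝ) := by
    apply Finset.sum_le_sum
    intro t _
    have hgi := grad_convex_ineq (hconv t) (hdiff t) (w t) x
    have hgt : g t = gradient (f t) (w t) := by rw [hg]
    rw [hgt]
    have hsw : (inner ℝ (gradient (f t) (w t)) (x - w t) : ℝ)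
        = - inner ℝ (gradient (f t) (w t)) (w t - x) := by
      rw [← inner_neg_right]
      congr 1
      abel
    linarith [hgi, hsw.le, hsw.ge]
  have hself : S T ≤ δ + 4 * H * ∑ t ∈ Finset.Icc 1 T, f t (w t) := by
    have hpt : ∀ t ∈ Finset.Icc 1 T, a t ≤ 4 * H * f t (w t) := by
      intro t _
      have hsb := self_bound (hdiff t) (hnonneg t) hH (hsmooth t) (w t)
      have hat : a t = ‖gradient (f t) (w t)‖ ^ 2 := by rw [ha, hg]
      rw [hat]
      exact hsb
    have hsum := Finset.sum_le_sum hpt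
    have hms : ∑ t ∈ Finset.Icc 1 T, 4 * H * f t (w t)
        = 4 * H * ∑ t ∈ Finset.Icc 1 T, f t (w t) := by
      rw [Finset.mul_sum]
    simp only [hS]
    linarith [hsum, hms.le, hms.ge]
  set R := ∑ t ∈ Finset.Icc 1 T, f t (w t) with hR
  set Sx := ∑ t ∈ Finset.Icc 1 T, f t x with hSxdef
  have hregret : R - Sx ≤ D * Real.sqrt (2 * S T) := by
    have hsplit : ∑ t ∈ Finset.Icc 1 T, (f t (w t) - f t x) = R - Sx :=
      Finset.sum_sub_distrib _ _
    calc R - Sx = ∑ t ∈ Finset.Icc 1 T, (f t (w t) - f t x) := hsplit.symm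
      _ ≤ ∑ t ∈ Finset.Icc 1 T, (inner ℝ (g t) (w t - x) : ℝ) := hinner_sum
      _ ≤ D ^ 2 * Real.sqrt (S T) / (2 * α) + α * Real.sqrt (S T) := hbound1
      _ = D * Real.sqrt 2 * Real.sqrt (S T) := hid
      _ = D * Real.sqrt (2 * S T) := by rw [hsqrt2S]; ring
  set r := R - Sx with hrdef
  have hfinal : r ≤ D * Real.sqrt (2 * δ + 8 * H * Sx + 8 * H * r) := by
    refine le_trans hregret ?_
    apply mul_le_mul_of_nonneg_left ?_ hDpos.le
    apply Real.sqrt_le_sqrt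
    have hRr : R = Sx + r := by rw [hrdef]; ring
    nlinarith [hself, hRr.le, hRr.ge]
  rcases le_or_gt r 0 with hrle | hrpos
  · have h1 : 0 ≤ 8 * H * D ^ 2 := by positivity
    have h2 : 0 ≤ D * Real.sqrt (2 * δ + 8 * H * Sx) :=
      mul_nonneg hD0 (Real.sqrt_nonneg _)
    linarith
  · have hAnn : 0 ≤ 2 * δ + 8 * H * Sx := by nlinarith [mul_nonneg hH hSx_nonneg]
    have hArg : 0 ≤ 2 * δ + 8 * H * Sx + 8 * H * r := by
      nlinarith [mul_nonneg hH hrpos.le]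
    have hsqA : Real.sqrt (2 * δ + 8 * H * Sx) ^ 2 = 2 * δ + 8 * H * Sx :=
      Real.sq_sqrt hAnn
    have hsqArg : Real.sqrt (2 * δ + 8 * H * Sx + 8 * H * r) ^ 2
        = 2 * δ + 8 * H * Sx + 8 * H * r := Real.sq_sqrt hArg
    have hsq : r ^ 2 ≤ D ^ 2 * (2 * δ + 8 * H * Sx + 8 * H * r) := by
      have hmul := mul_le_mul hfinal hfinal hrpos.le
        (mul_nonneg hD0 (Real.sqrt_nonneg _))
      nlinarith [hmul, hsqArg]
    by_contra hcon
    push_neg at hcon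
    have hsAnn : 0 ≤ Real.sqrt (2 * δ + 8 * H * Sx) := Real.sqrt_nonneg _
    have ht1 : 0 < r - 8 * H * D ^ 2 - D * Real.sqrt (2 * δ + 8 * H * Sx) := by
      linarith
    have ht2 : 0 < r * (r - 8 * H * D ^ 2 - D * Real.sqrt (2 * δ + 8 * H * Sx)) :=
      mul_pos hrpos ht1
    have ht3 : 0 ≤ (D * Real.sqrt (2 * δ + 8 * H * Sx))
        * (r - 8 * H * D ^ 2 - D * Real.sqrt (2 * δ + 8 * H * Sx)) :=
      mul_nonneg (mul_nonneg hD0 hsAnn) ht1.le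
    nlinarith [hsq, ht2, ht3, hsqA,
      mul_nonneg (mul_nonneg hH (pow_nonneg hD0 3)) hsAnn]
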